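/- Lyapunov-weighted energy comparison (integral identity): for real numbers f_i, f_{i+1}, W_i, W_{i+1} with W_i, W_{i+1} > 0, one has (f_{i+1}²/W_{i+1} - f_i²/W_i)(W_{i+1} - W_i) = (f_{i+1} - f_i)² - ∫₀¹ ((f_{i+1} - f_i) - ((f_i + s(f_{i+1}-f_i))/(W_i + s(W_{i+1}-W_i)))(W_{i+1} - W_i))² ds. -/

import Mathlib

/-- Lyapunov-weighted energy comparison (integral identity). -/
theorem lyapunov_integral_identity (f₀ f₁ W₀ W₁ : ℝ) (hW₀ : 0 < W₀) (hW₁ : 0 < W₁) :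
    (f₁^2 / W₁ - f₀^2 / W₀) * (W₁ - W₀)
      = (f₁ - f₀)^2
        - ∫ s in (0:ℝ)..1,
            ((f₁ - f₀) - ((f₀ + s * (f₁ - f₀)) / (W₀ + s * (W₁ - W₀))) * (W₁ - W₀))^2 := by
  set df := f₁ - f₀ with hdf
  set dW := W₁ - W₀ with hdW
  have hWpos : ∀ s ∈ Set.uIcc (0:ℝ) 1, 0 < W₀ + s * dW := by
    intro s hs
    rw [Set.uIcc_of_le zero_le_one] at hs
    obtain ⟨h0, h1⟩ := hs
    rcases le_or_gt s (1/2) with h | h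
    · nlinarith
    · nlinarith
  have key : ∀ s ∈ Set.uIcc (0:ℝ) 1,
      HasDerivAt (fun s => df^2 * s - dW * ((f₀ + s*df)^2 / (W₀ + s*dW)))
        ((df - ((f₀ + s*df)/(W₀ + s*dW)) * dW)^2) s := by
    intro s hs
    have hW := hWpos s hs
    have hnum : HasDerivAt (fun s : ℝ => (f₀ + s*df)^2) (2*(f₀+s*df)^1*df) s := by
      have h : HasDerivAt (fun s : ℝ => f₀ + s*df) df s := by
        simpa using ((hasDerivAt_id s).mul_const df).const_add f₀
      have := h.fun_pow 2
      simpa using this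
    have hden : HasDerivAt (fun s : ℝ => W₀ + s*dW) dW s := by
      simpa using ((hasDerivAt_id s).mul_const dW).const_add W₀
    have hdiv := hnum.fun_div hden hW.ne'
    have hlin : HasDerivAt (fun s : ℝ => df^2 * s) (df^2) s := by
      simpa using (hasDerivAt_id s).const_mul (df^2)
    have := hlin.fun_sub (hdiv.const_mul dW)
    convert this using 1
    · rfl
    · rfl
    field_simp
    ring
  have hcont : ContinuousOn
      (fun s => (df - ((f₀ + s*df)/(W₀ + s*dW)) * dW)^2) (Set.uIcc (0:ℝ) 1) := by
    apply ContinuousOn.pow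
    apply ContinuousOn.sub continuousOn_const
    apply ContinuousOn.mul _ continuousOn_const
    exact ContinuousOn.div (by fun_prop) (by fun_prop)
      (fun s hs => (hWpos s hs).ne')
  have hint := intervalIntegral.integral_eq_sub_of_hasDerivAt key
    (hcont.intervalIntegrable)
  rw [hint]
  have h1 : W₀ + 1*dW = W₁ := by rw [hdW]; ring
  have h0 : W₀ + 0*dW = W₀ := by ring
  have hf1 : f₀ + 1*df = f₁ := by rw [hdf]; ring
  have hf0 : f₀ + 0*df = f₀ := by ring
  simp only [h1, h0, hf1, hf0]
  ring
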